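/- Let λ ∈ (0,1) and m ≥ 2. The function f defined on {z : Re(z) > -1/(m+1)} by f(z) = 1 + Σ_{k=1}^m (-1)^k C(m,k) (1+kz)^{1-λ} ((1+(k+1)z)/(1+z))^{λ} (using principal branches) is holomorphic and does not vanish identically; in particular f(1/n) ≠ 0 for some integer n ≥ 1. -/

import Mathlib

open Complex

namespace AluthgeAux

open Finset Real


/-- descending product `x(x-1)...(x-n+1)` -/
noncomputable def dp (x : ℂ) (n : ℕ) : ℂ := ∏ i ∈ range n, (x - i)

@[simp] lemma dp_zero (x : ℂ) : dp x 0 = 1 := by simp [dp]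

lemma dp_succ (x : ℂ) (n : ℕ) : dp x (n+1) = dp x n * (x - n) := by
  simp [dp, prod_range_succ]

lemma dp_succ' (x : ℂ) (n : ℕ) : dp x (n+1) = x * dp (x-1) n := by
  rw [dp, prod_range_succ']
  have h : ∀ i ∈ range n, x - ((i+1 : ℕ) : ℂ) = (x - 1) - i := fun i _ => by push_cast; ring
  rw [prod_congr rfl h]
  simp [dp, mul_comm]

lemma dp_zero_left (n : ℕ) (hn : 1 ≤ n) : dp 0 n = 0 := by
  refine prod_eq_zero (by simp; omega : (0:ℕ) ∈ range n) (by simp)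

lemma dp_one_left (n : ℕ) (hn : 2 ≤ n) : dp 1 n = 0 := by
  refine prod_eq_zero (by simp; omega : (1:ℕ) ∈ range n) (by simp)

lemma dp_neg_one (m : ℕ) : dp (-1) m = (-1)^m * m.factorial := by
  induction m with
  | zero => simp
  | succ n ih =>
    rw [dp_succ, ih, Nat.factorial_succ]
    push_cast
    ring

lemma pascal_regroup (u v : ℕ → ℂ) (n : ℕ) :
    ∑ j ∈ range (n+1), (n.choose j : ℂ) * (u (j+1) * v (n-j) + u j * v (n+1-j))
      = ∑ j ∈ range (n+2), ((n+1).choose j : ℂ) * (u j * v (n+1-j)) := by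
  have h1 : ∑ j ∈ range (n+2), ((n+1).choose j : ℂ) * (u j * v (n+1-j))
      = (∑ j ∈ range (n+1), ((n+1).choose (j+1) : ℂ) * (u (j+1) * v (n-j))) + u 0 * v (n+1) := by
    rw [Finset.sum_range_succ']
    simp [Nat.succ_sub_succ]
  have h3 : ∑ j ∈ range (n+2), ((n:ℕ).choose j : ℂ) * (u j * v (n+1-j))
      = (∑ j ∈ range (n+1), ((n:ℕ).choose (j+1) : ℂ) * (u (j+1) * v (n-j))) + u 0 * v (n+1) := by
    rw [Finset.sum_range_succ']
    simp [Nat.succ_sub_succ]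
  have h4 : ∑ j ∈ range (n+2), ((n:ℕ).choose j : ℂ) * (u j * v (n+1-j))
      = ∑ j ∈ range (n+1), ((n:ℕ).choose j : ℂ) * (u j * v (n+1-j)) := by
    rw [Finset.sum_range_succ]
    simp [Nat.choose_succ_self]
  have h2 : ∑ j ∈ range (n+1), ((n:ℕ).choose (j+1) : ℂ) * (u (j+1) * v (n-j))
      = ∑ j ∈ range (n+1), ((n:ℕ).choose j : ℂ) * (u j * v (n+1-j)) - u 0 * v (n+1) := by
    rw [← h4, h3]; ring
  rw [h1]
  have h5 : ∀ j ∈ range (n+1), ((n+1).choose (j+1) : ℂ) * (u (j+1) * v (n-j))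
      = ((n:ℕ).choose j : ℂ) * (u (j+1) * v (n-j)) + ((n:ℕ).choose (j+1) : ℂ) * (u (j+1) * v (n-j)) := by
    intro j _
    rw [Nat.choose_succ_succ]
    push_cast
    ring
  rw [Finset.sum_congr rfl h5, Finset.sum_add_distrib, h2]
  rw [Finset.sum_congr rfl (fun j _ => mul_add ((n.choose j : ℂ)) (u (j+1) * v (n-j)) (u j * v (n+1-j))),
    Finset.sum_add_distrib]
  ring

lemma dp_vandermonde (x y : ℂ) : ∀ n : ℕ,
    dp (x+y) n = ∑ j ∈ range (n+1), (n.choose j : ℂ) * (dp x j * dp y (n-j)) := by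
  intro n
  induction n with
  | zero => simp
  | succ n ih =>
    rw [dp_succ, ih, Finset.sum_mul]
    rw [Finset.sum_congr rfl (fun j hj => ?_), pascal_regroup (dp x) (dp y) n]
    have hj : j ≤ n := Nat.lt_succ_iff.mp (Finset.mem_range.mp hj)
    have h1 : dp x (j+1) = dp x j * (x - j) := dp_succ x j
    have h2 : dp y (n+1-j) = dp y (n-j) * (y - (n-j : ℕ)) := by
      rw [Nat.succ_sub hj]; exact dp_succ y (n-j)
    have h3 : ((n - j : ℕ) : ℂ) = (n : ℂ) - j := by
      push_cast [Nat.cast_sub hj]; ring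
    rw [h1, h2, h3]
    ring



lemma alt_choose_sum (m : ℕ) (hm : m ≠ 0) :
    ∑ k ∈ range (m+1), (-1:ℂ)^k * (m.choose k : ℂ) = 0 := by
  have h := Int.alternating_sum_range_choose_of_ne hm
  have h2 : ((∑ i ∈ range (m+1), (-1:ℤ)^i * (m.choose i : ℤ) : ℤ) : ℂ) = 0 := by rw [h]; simp
  push_cast at h2
  exact h2

lemma alt_sum_pow : ∀ (m r : ℕ), r ≤ m →
    ∑ k ∈ range (m+1), (-1:ℂ)^k * (m.choose k : ℂ) * (k:ℂ)^r
      = if r = m then (-1:ℂ)^m * m.factorial else 0 := by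
  intro m
  induction m with
  | zero =>
    intro r hr
    interval_cases r
    simp
  | succ m ih =>
    intro r hr
    match r with
    | 0 =>
      rw [if_neg (by omega)]
      simpa using alt_choose_sum (m+1) (by omega)
    | (r'+1) =>
      have key : ∑ k ∈ range (m+2), (-1:ℂ)^k * ((m+1).choose k : ℂ) * (k:ℂ)^(r'+1)
          = -((m:ℂ)+1) * ∑ k ∈ range (m+1), (-1:ℂ)^k * (m.choose k : ℂ) * ((k:ℂ)+1)^r' := by
        rw [Finset.sum_range_succ']
        have h0 : (-1:ℂ)^0 * ((m+1).choose 0 : ℂ) * ((0:ℕ):ℂ)^(r'+1) = 0 := by simp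
        rw [h0, add_zero, Finset.mul_sum]
        refine Finset.sum_congr rfl fun k _ => ?_
        have habs : ((m+1).choose (k+1) : ℂ) * ((k:ℂ)+1) = ((m:ℂ)+1) * (m.choose k : ℂ) := by
          have := Nat.add_one_mul_choose_eq m k
          have h2 : ((m+1) * m.choose k : ℕ) = ((m+1).choose (k+1) * (k+1) : ℕ) := this
          have h3 : (((m+1) * m.choose k : ℕ) : ℂ) = (((m+1).choose (k+1) * (k+1) : ℕ) : ℂ) := by
            rw [h2]
          push_cast at h3
          linear_combination -h3
        have hp : ((k:ℂ)+1)^(r'+1) = ((k:ℂ)+1) * ((k:ℂ)+1)^r' := by ring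
        push_cast
        calc (-1:ℂ)^(k+1) * ((m+1).choose (k+1) : ℂ) * ((k:ℂ)+1)^(r'+1)
            = -((-1:ℂ)^k * (((m+1).choose (k+1) : ℂ) * ((k:ℂ)+1)) * ((k:ℂ)+1)^r') := by ring
          _ = -((m:ℂ)+1) * ((-1:ℂ)^k * (m.choose k : ℂ) * ((k:ℂ)+1)^r') := by rw [habs]; ring
      rw [key]
      have hexp : ∀ k ∈ range (m+1), (-1:ℂ)^k * (m.choose k : ℂ) * ((k:ℂ)+1)^r'
          = ∑ i ∈ range (r'+1), (r'.choose i : ℂ) * ((-1:ℂ)^k * (m.choose k : ℂ) * (k:ℂ)^i) := by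
        intro k _
        rw [add_pow]
        rw [Finset.mul_sum]
        refine Finset.sum_congr rfl fun i _ => ?_
        ring
      rw [Finset.sum_congr rfl hexp, Finset.sum_comm]
      have hinner : ∀ i ∈ range (r'+1),
          ∑ k ∈ range (m+1), (r'.choose i : ℂ) * ((-1:ℂ)^k * (m.choose k : ℂ) * (k:ℂ)^i)
          = (r'.choose i : ℂ) * (if i = m then (-1:ℂ)^m * m.factorial else 0) := by
        intro i hi
        rw [← Finset.mul_sum, ih i (le_trans (Nat.lt_succ_iff.mp (Finset.mem_range.mp hi)) (by omega))]
      rw [Finset.sum_congr rfl hinner]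
      simp only [mul_ite, mul_zero]
      rw [Finset.sum_ite_eq' (range (r'+1)) m]
      by_cases hmr : r' = m
      · subst hmr
        rw [if_pos (by simp), if_pos (by omega)]
        simp [Nat.factorial_succ]
        push_cast
        ring
      · have hr' : r' < m := by omega
        rw [if_neg (by simp; omega), if_neg (by omega)]
        ring

lemma choose_absorb (M j : ℕ) (h : j ≤ M) :
    (M+1).choose j * (M+1-j) = (M+1) * M.choose j := by
  have h1 : (M+1).choose j = (M+1).choose (M+1-j) := by
    rw [Nat.choose_symm (by omega)]
  have h2 : M+1-j = (M-j)+1 := by omega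
  have h3 := Nat.add_one_mul_choose_eq M (M-j)
  rw [h1, h2, ← h3, Nat.choose_symm h]

lemma two_choose : ∀ d : ℕ, 2 * (d+2).choose d = (d+2) * (d+1)
  | 0 => by decide
  | (d+1) => by
    have ih := two_choose d
    have h1 : (d+2+1).choose (d+1) = (d+2).choose d + (d+2).choose (d+1) :=
      Nat.choose_succ_succ _ _
    have h2 : (d+2).choose (d+1) = d+2 := by
      have := Nat.choose_succ_self_right (d+1)
      simpa using this
    calc 2 * (d+1+2).choose (d+1) = 2 * (d+2).choose d + 2 * ((d+2).choose (d+1)) := by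
          rw [show d+1+2 = d+2+1 by omega, h1]; ring
      _ = (d+2) * (d+1) + 2 * (d+2) := by rw [ih, h2]
      _ = (d+1+2) * (d+1+1) := by ring



lemma pos_re_mem_slitPlane {a : ℂ} (ha : 0 < a.re) : a ∈ slitPlane :=
  mem_slitPlane_iff.mpr (Or.inl ha)

lemma div_mem_slitPlane {a b : ℂ} (ha : 0 < a.re) (hb : 0 < b.re) : a / b ∈ slitPlane := by
  rw [mem_slitPlane_iff]
  by_contra h
  push_neg at h
  obtain ⟨h1, h2⟩ := h
  have hb0 : b ≠ 0 := fun h => by simp [h] at hb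
  have ha0 : a = (a / b) * b := (div_mul_cancel₀ a hb0).symm
  have hre : a.re = (a/b).re * b.re - (a/b).im * b.im := by
    conv_lhs => rw [ha0]
    simp [Complex.mul_re]
  rw [h2] at hre
  simp at hre
  nlinarith

lemma arg_div_of_pos_re {a b : ℂ} (ha : 0 < a.re) (hb : 0 < b.re) :
    (a / b).arg = a.arg - b.arg := by
  have ha0 : a ≠ 0 := fun h => by simp [h] at ha
  have hb0 : b ≠ 0 := fun h => by simp [h] at hb
  have h1 := Complex.arg_div_coe_angle ha0 hb0
  have h2 : ((a.arg - b.arg : ℝ) : Real.Angle) = ((a/b).arg : Real.Angle) := by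
    rw [Real.Angle.coe_sub, h1]
  have haa : |a.arg| < π / 2 := Complex.abs_arg_lt_pi_div_two_iff.mpr (Or.inl ha)
  have hba : |b.arg| < π / 2 := Complex.abs_arg_lt_pi_div_two_iff.mpr (Or.inl hb)
  have hmem : a.arg - b.arg ∈ Set.Ioc (-π) π := by
    constructor
    · have := Real.pi_pos; cases abs_lt.mp haa; cases abs_lt.mp hba; linarith
    · have := Real.pi_pos; cases abs_lt.mp haa; cases abs_lt.mp hba; linarith
  have h3 : ((a.arg - b.arg : ℝ) : Real.Angle).toReal = a.arg - b.arg :=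
    Real.Angle.toReal_coe_eq_self_iff_mem_Ioc.mpr hmem
  rw [h2, Complex.arg_coe_angle_toReal_eq_arg] at h3
  exact h3

lemma cpow_div_mul {a b : ℂ} (r : ℂ) (ha : 0 < a.re) (hb : 0 < b.re) :
    (a / b) ^ r * b ^ r = a ^ r := by
  have ha0 : a ≠ 0 := fun h => by simp [h] at ha
  have hb0 : b ≠ 0 := fun h => by simp [h] at hb
  have hq0 : a / b ≠ 0 := div_ne_zero ha0 hb0
  rw [Complex.cpow_def_of_ne_zero hq0, Complex.cpow_def_of_ne_zero hb0,
    Complex.cpow_def_of_ne_zero ha0, ← Complex.exp_add]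
  have hlog : Complex.log (a/b) + Complex.log b = Complex.log a := by
    rw [← Complex.log_mul hq0 hb0 ?harg, div_mul_cancel₀ a hb0]
    rw [arg_div_of_pos_re ha hb]
    simpa using (Complex.arg_mem_Ioc a)
  rw [← hlog]
  ring_nf



lemma hasDerivAt_linear (a z : ℂ) : HasDerivAt (fun w : ℂ => 1 + a * w) a z := by
  simpa using ((hasDerivAt_id z).const_mul a).const_add 1

lemma hasDerivAt_cpow_lin {a z : ℂ} (h : 0 < (1 + a * z).re) (e : ℂ) :
    HasDerivAt (fun w => (1 + a * w) ^ e) (e * (1 + a * z) ^ (e - 1) * a) z :=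
  (hasDerivAt_linear a z).cpow_const (pos_re_mem_slitPlane h)

lemma iterated_formula (K : ℕ) (c a b : ℕ → ℂ) (s t : ℂ) : ∀ (n : ℕ), ∀ z : ℂ,
    (∀ k ∈ range K, 0 < (1 + a k * z).re ∧ 0 < (1 + b k * z).re) →
    iteratedDeriv n (fun w => ∑ k ∈ range K, c k * ((1 + a k * w) ^ s * (1 + b k * w) ^ t)) z
      = ∑ k ∈ range K, c k * ∑ j ∈ range (n+1), ((n.choose j : ℂ) *
          ((a k ^ j * dp s j * (1 + a k * z) ^ (s - (j:ℕ))) *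
           (b k ^ (n-j) * dp t (n-j) * (1 + b k * z) ^ (t - ((n-j : ℕ):ℂ))))) := by
  intro n
  induction n with
  | zero =>
    intro z _
    simp [iteratedDeriv_zero, dp_zero]
  | succ n IH =>
    intro z hz
    rw [iteratedDeriv_succ]
    have hVo : IsOpen {w : ℂ | ∀ k ∈ range K, 0 < (1 + a k * w).re ∧ 0 < (1 + b k * w).re} := by
      have hset : {w : ℂ | ∀ k ∈ range K, 0 < (1 + a k * w).re ∧ 0 < (1 + b k * w).re}
          = ⋂ k ∈ range K, ({w : ℂ | 0 < (1 + a k * w).re} ∩ {w : ℂ | 0 < (1 + b k * w).re}) := by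
        ext w; simp [Set.mem_iInter]
      rw [hset]
      refine isOpen_biInter_finset fun k _ => IsOpen.inter ?_ ?_
      · exact isOpen_lt continuous_const (Complex.continuous_re.comp
          (continuous_const.add (continuous_const.mul continuous_id)))
      · exact isOpen_lt continuous_const (Complex.continuous_re.comp
          (continuous_const.add (continuous_const.mul continuous_id)))
    have hEq : iteratedDeriv n
          (fun w => ∑ k ∈ range K, c k * ((1 + a k * w) ^ s * (1 + b k * w) ^ t))
        =ᶠ[nhds z] (fun w => ∑ k ∈ range K, c k * ∑ j ∈ range (n+1), ((n.choose j : ℂ) *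
          ((a k ^ j * dp s j * (1 + a k * w) ^ (s - (j:ℕ))) *
           (b k ^ (n-j) * dp t (n-j) * (1 + b k * w) ^ (t - ((n-j : ℕ):ℂ)))))) :=
      Filter.eventuallyEq_of_mem (hVo.mem_nhds hz) (fun w hw => IH w hw)
    rw [hEq.deriv_eq]
    have hD : HasDerivAt (fun w => ∑ k ∈ range K, c k * ∑ j ∈ range (n+1), ((n.choose j : ℂ) *
          ((a k ^ j * dp s j * (1 + a k * w) ^ (s - (j:ℕ))) *
           (b k ^ (n-j) * dp t (n-j) * (1 + b k * w) ^ (t - ((n-j : ℕ):ℂ))))))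
        (∑ k ∈ range K, c k * ∑ j ∈ range (n+1), ((n.choose j : ℂ) *
          ((a k ^ j * dp s j * ((s - (j:ℕ)) * (1 + a k * z) ^ (s - (j:ℕ) - 1) * a k)) *
           (b k ^ (n-j) * dp t (n-j) * (1 + b k * z) ^ (t - ((n-j : ℕ):ℂ)))
          + (a k ^ j * dp s j * (1 + a k * z) ^ (s - (j:ℕ))) *
            (b k ^ (n-j) * dp t (n-j) *
              ((t - ((n-j:ℕ):ℂ)) * (1 + b k * z) ^ (t - ((n-j:ℕ):ℂ) - 1) * b k))))) z := by
      refine HasDerivAt.fun_sum fun k hk => HasDerivAt.const_mul (c k)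
        (HasDerivAt.fun_sum fun j hj => HasDerivAt.const_mul _ ?_)
      have h1 : HasDerivAt (fun w => a k ^ j * dp s j * (1 + a k * w) ^ (s - (j:ℕ)))
          (a k ^ j * dp s j * ((s - (j:ℕ)) * (1 + a k * z) ^ (s - (j:ℕ) - 1) * a k)) z :=
        (hasDerivAt_cpow_lin (hz k hk).1 _).const_mul _
      have h2 : HasDerivAt (fun w => b k ^ (n-j) * dp t (n-j) * (1 + b k * w) ^ (t - ((n-j:ℕ):ℂ)))
          (b k ^ (n-j) * dp t (n-j) *
            ((t - ((n-j:ℕ):ℂ)) * (1 + b k * z) ^ (t - ((n-j:ℕ):ℂ) - 1) * b k)) z :=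
        (hasDerivAt_cpow_lin (hz k hk).2 _).const_mul _
      exact h1.mul h2
    rw [hD.deriv]
    refine Finset.sum_congr rfl fun k hk => ?_
    congr 1
    have hreg := pascal_regroup (fun j => a k ^ j * dp s j * (1 + a k * z) ^ (s - (j:ℕ)))
      (fun i => b k ^ i * dp t i * (1 + b k * z) ^ (t - (i:ℕ))) n
    rw [← hreg]
    refine Finset.sum_congr rfl fun j hj => ?_
    have hjn : j ≤ n := Nat.lt_succ_iff.mp (mem_range.mp hj)
    have e1 : (s - ((j+1 : ℕ):ℂ)) = s - (j:ℕ) - 1 := by push_cast; ring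
    have e2 : (t - (((n-j)+1 : ℕ):ℂ)) = t - ((n-j:ℕ):ℂ) - 1 := by push_cast; ring
    have e3 : n+1-j = (n-j)+1 := by omega
    rw [e3, dp_succ s j, dp_succ t (n-j), e1, e2]
    push_cast
    ring

lemma key_nat (m j : ℕ) (hj : j ≤ m) :
    2 * ((m+2).choose j * ((m+2-j).choose (m-j))) = (m+2) * (m+1) * (m.choose j) := by
  have h1 := two_choose (m-j)
  have h2 := choose_absorb (m+1) j (by omega)
  have h3 := choose_absorb m j hj
  calc 2 * ((m+2).choose j * ((m+2-j).choose (m-j)))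
      = (m+2).choose j * (2 * ((m-j+2).choose (m-j))) := by
        rw [show m+2-j = (m-j)+2 by omega]; ring
    _ = (m+2).choose j * ((m-j+2)*(m-j+1)) := by rw [h1]
    _ = ((m+2).choose j * (m+2-j)) * (m+1-j) := by
        rw [show m-j+2 = m+2-j by omega, show m-j+1 = m+1-j by omega]; ring
    _ = (m+2)*((m+1).choose j * (m+1-j)) := by
        rw [show m+1+1 = m+2 by omega] at h2; rw [h2]; ring
    _ = (m+2)*(m+1)*(m.choose j) := by rw [h3]; ring

lemma key_nonzero (m : ℕ) (hm : 2 ≤ m) (t : ℂ) (ht : t ≠ 0) (ht1 : t ≠ 1) :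
    iteratedDeriv (m+2) (fun w => ∑ k ∈ range (m+1),
      ((-1:ℂ)^k * (m.choose k : ℂ)) * ((1 + (k:ℂ) * w) ^ (1-t) * (1 + ((k:ℂ)+1) * w) ^ t)) 0 ≠ 0 := by
  set s : ℂ := 1 - t with hs
  set N : ℕ := m + 2 with hN
  have hz : ∀ k ∈ range (m+1), (0:ℝ) < (1 + (k:ℂ) * 0).re ∧ (0:ℝ) < (1 + ((k:ℂ)+1) * 0).re := by
    intro k _; norm_num
  have hIter := iterated_formula (m+1) (fun k => (-1:ℂ)^k * (m.choose k : ℂ))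
      (fun k => (k:ℂ)) (fun k => (k:ℂ)+1) s t N 0 hz
  simp only [mul_zero, add_zero, one_cpow, mul_one] at hIter
  rw [hIter]
  -- the polynomial
  set R : Polynomial ℂ := ∑ j ∈ range (N+1),
      Polynomial.C ((N.choose j : ℂ) * dp s j * dp t (N-j)) *
        ((Polynomial.X + 1) ^ (N-j) * Polynomial.X ^ j) with hR
  have hcoeff : ∀ r : ℕ, R.coeff r = ∑ j ∈ range (N+1),
      ((N.choose j : ℂ) * dp s j * dp t (N-j)) *
        (if j ≤ r then (((N-j).choose (r-j) : ℕ):ℂ) else 0) := by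
    intro r
    rw [hR, Polynomial.finset_sum_coeff]
    refine Finset.sum_congr rfl fun j hj => ?_
    rw [Polynomial.coeff_C_mul, Polynomial.coeff_mul_X_pow']
    by_cases h : j ≤ r
    · rw [if_pos h, if_pos h, Polynomial.coeff_X_add_one_pow]
    · rw [if_neg h, if_neg h, mul_zero]
  have hdeg : R.natDegree < N + 1 := by
    have hbound : R.natDegree ≤ N := by
      refine Polynomial.natDegree_sum_le_of_forall_le _ _ fun j hj => ?_
      have hjN : j ≤ N := Nat.lt_succ_iff.mp (mem_range.mp hj)
      have hx1 : ((Polynomial.X : Polynomial ℂ) + 1).natDegree ≤ 1 := by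
        refine le_trans (Polynomial.natDegree_add_le _ _) ?_
        simp [Polynomial.natDegree_X]
      have h1 : (((Polynomial.X : Polynomial ℂ) + 1) ^ (N-j)).natDegree ≤ N - j := by
        refine le_trans Polynomial.natDegree_pow_le ?_
        calc (N-j) * ((Polynomial.X : Polynomial ℂ) + 1).natDegree ≤ (N-j) * 1 :=
              Nat.mul_le_mul_left _ hx1
          _ = N - j := by omega
      have h2 : ((Polynomial.X : Polynomial ℂ) ^ j).natDegree ≤ j :=
        le_of_eq (Polynomial.natDegree_X_pow j)
      have h3 : (((Polynomial.X : Polynomial ℂ) + 1) ^ (N-j) * Polynomial.X ^ j).natDegree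
          ≤ (N-j) + j :=
        le_trans Polynomial.natDegree_mul_le (Nat.add_le_add h1 h2)
      refine le_trans Polynomial.natDegree_mul_le ?_
      rw [Polynomial.natDegree_C]
      omega
    exact Nat.lt_succ_of_le hbound
  -- E = ∑_k c_k eval
  have hE1 : ∑ k ∈ range (m+1), ((-1:ℂ)^k * (m.choose k : ℂ)) *
        ∑ j ∈ range (N+1), ((N.choose j : ℂ) *
          (((k:ℂ)) ^ j * dp s j * (((k:ℂ)+1) ^ (N-j) * dp t (N-j))))
      = ∑ k ∈ range (m+1), ((-1:ℂ)^k * (m.choose k : ℂ)) * R.eval (k:ℂ) := by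
    refine Finset.sum_congr rfl fun k hk => ?_
    congr 1
    rw [hR]
    simp only [Polynomial.eval_finset_sum, Polynomial.eval_mul, Polynomial.eval_C,
      Polynomial.eval_pow, Polynomial.eval_add, Polynomial.eval_X, Polynomial.eval_one]
    exact Finset.sum_congr rfl fun j hj => by ring
  have hE2 : ∑ k ∈ range (m+1), ((-1:ℂ)^k * (m.choose k : ℂ)) * R.eval (k:ℂ)
      = ∑ r ∈ range (N+1), R.coeff r *
          (∑ k ∈ range (m+1), (-1:ℂ)^k * (m.choose k : ℂ) * (k:ℂ)^r) := by
    have : ∀ k ∈ range (m+1), ((-1:ℂ)^k * (m.choose k : ℂ)) * R.eval (k:ℂ)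
        = ∑ r ∈ range (N+1), R.coeff r * ((-1:ℂ)^k * (m.choose k : ℂ) * (k:ℂ)^r) := by
      intro k _
      rw [Polynomial.eval_eq_sum_range' hdeg, Finset.mul_sum]
      exact Finset.sum_congr rfl fun r _ => by ring
    rw [Finset.sum_congr rfl this, Finset.sum_comm]
    exact Finset.sum_congr rfl fun r _ => by rw [Finset.mul_sum]
  -- coefficient values
  have hvand : ∀ (x y : ℂ) (M : ℕ), ∑ j ∈ range (M+1),
      (M.choose j : ℂ) * dp x j * dp y (M-j) = dp (x+y) M := by
    intro x y M
    rw [dp_vandermonde x y M]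
    exact Finset.sum_congr rfl fun j _ => by ring
  have hcN : R.coeff N = 0 := by
    rw [hcoeff N]
    have : ∀ j ∈ range (N+1), ((N.choose j : ℂ) * dp s j * dp t (N-j)) *
        (if j ≤ N then (((N-j).choose (N-j) : ℕ):ℂ) else 0)
        = (N.choose j : ℂ) * dp s j * dp t (N-j) := by
      intro j hj
      rw [if_pos (Nat.lt_succ_iff.mp (mem_range.mp hj)), Nat.choose_self]
      simp
    rw [Finset.sum_congr rfl this, hvand s t N]
    rw [show s + t = 1 by rw [hs]; ring]
    exact dp_one_left N (by omega)
  have hcN1 : R.coeff (m+1) = 0 := by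
    rw [hcoeff (m+1)]
    rw [show N + 1 = (m+2) + 1 by omega, Finset.sum_range_succ]
    rw [if_neg (by omega), mul_zero, add_zero]
    have hterm : ∀ j ∈ range (m+2), ((N.choose j : ℂ) * dp s j * dp t (N-j)) *
        (if j ≤ m+1 then (((N-j).choose (m+1-j) : ℕ):ℂ) else 0)
        = ((N:ℕ):ℂ) * t * (((m+1).choose j : ℂ) * (dp s j * dp (t-1) (m+1-j))) := by
      intro j hj
      have hjm : j ≤ m+1 := Nat.lt_succ_iff.mp (mem_range.mp hj)
      rw [if_pos hjm]
      have e1 : N - j = (m+1-j)+1 := by omega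
      have e2 : ((N-j).choose (m+1-j)) = (m+1-j)+1 := by
        rw [e1]; exact Nat.choose_succ_self_right _
      have e3 : ((N.choose j) * (N - j) : ℕ) = (N * (m+1).choose j : ℕ) := by
        have := choose_absorb (m+1) j hjm
        rw [show (m+1)+1 = N by omega] at this
        rw [show N - j = (m+1)+1-j by omega]
        exact this
      have e4 : (((N-j).choose (m+1-j) : ℕ):ℂ) = ((N-j : ℕ):ℂ) := by rw [e2, ← e1]
      have e5 : ((N.choose j : ℕ):ℂ) * ((N-j : ℕ):ℂ) = ((N:ℕ):ℂ) * (((m+1).choose j : ℕ):ℂ) := by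
        push_cast [← Nat.cast_mul, e3]; push_cast; ring
      rw [e4]
      have e6 : dp t (N-j) = t * dp (t-1) (m+1-j) := by rw [e1, dp_succ']
      rw [e6]
      calc (N.choose j : ℂ) * dp s j * (t * dp (t-1) (m+1-j)) * ((N-j:ℕ):ℂ)
          = ((N.choose j : ℂ) * ((N-j:ℕ):ℂ)) * (dp s j * (t * dp (t-1) (m+1-j))) := by ring
        _ = (((N:ℕ):ℂ) * ((m+1).choose j : ℂ)) * (dp s j * (t * dp (t-1) (m+1-j))) := by rw [e5]
        _ = ((N:ℕ):ℂ) * t * (((m+1).choose j : ℂ) * (dp s j * dp (t-1) (m+1-j))) := by ring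
    rw [Finset.sum_congr rfl hterm, ← Finset.mul_sum]
    have : ∑ j ∈ range (m+2), (((m+1).choose j : ℂ)) * (dp s j * dp (t-1) (m+1-j)) = 0 := by
      have h := hvand s (t-1) (m+1)
      rw [show s + (t-1) = 0 by rw [hs]; ring] at h
      rw [dp_zero_left (m+1) (by omega)] at h
      rw [← h]
      exact Finset.sum_congr rfl fun j _ => by ring
    rw [this, mul_zero]
  have hcm : 2 * R.coeff m = ((N:ℕ):ℂ) * ((m+1:ℕ):ℂ) * t * (t-1) * ((-1:ℂ)^m * m.factorial) := by
    rw [hcoeff m]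
    rw [show N + 1 = (m+1) + 1 + 1 by omega, Finset.sum_range_succ, Finset.sum_range_succ]
    rw [if_neg (by omega), if_neg (by omega), mul_zero, mul_zero, add_zero, add_zero]
    rw [Finset.mul_sum]
    have hterm : ∀ j ∈ range (m+1), 2 * (((N.choose j : ℂ) * dp s j * dp t (N-j)) *
        (if j ≤ m then (((N-j).choose (m-j) : ℕ):ℂ) else 0))
        = ((N:ℕ):ℂ) * ((m+1:ℕ):ℂ) * t * (t-1) *
            ((m.choose j : ℂ) * (dp s j * dp (t-2) (m-j))) := by
      intro j hj
      have hjm : j ≤ m := Nat.lt_succ_iff.mp (mem_range.mp hj)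
      rw [if_pos hjm]
      have e1 : N - j = (m-j)+2 := by omega
      have e6 : dp t (N-j) = t * ((t-1) * dp (t-2) (m-j)) := by
        rw [e1, dp_succ', dp_succ']
        ring_nf
      have e3 := key_nat m j hjm
      have e5 : (2:ℂ) * ((N.choose j : ℂ) * (((N-j).choose (m-j) : ℕ):ℂ))
          = ((N:ℕ):ℂ) * ((m+1:ℕ):ℂ) * (m.choose j : ℂ) := by
        have : ((2 * ((m+2).choose j * ((m+2-j).choose (m-j))) : ℕ) : ℂ)
            = (((m+2) * (m+1) * (m.choose j) : ℕ) : ℂ) := by rw [e3]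
        push_cast at this
        rw [hN]
        push_cast
        linear_combination this
      rw [e6]
      calc 2 * ((N.choose j : ℂ) * dp s j * (t * ((t-1) * dp (t-2) (m-j))) * (((N-j).choose (m-j):ℕ):ℂ))
          = (2 * ((N.choose j : ℂ) * (((N-j).choose (m-j):ℕ):ℂ))) * (dp s j * (t * ((t-1) * dp (t-2) (m-j)))) := by ring
        _ = (((N:ℕ):ℂ) * ((m+1:ℕ):ℂ) * (m.choose j : ℂ)) * (dp s j * (t * ((t-1) * dp (t-2) (m-j)))) := by rw [e5]
        _ = ((N:ℕ):ℂ) * ((m+1:ℕ):ℂ) * t * (t-1) * ((m.choose j : ℂ) * (dp s j * dp (t-2) (m-j))) := by ring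
    rw [Finset.sum_congr rfl hterm, ← Finset.mul_sum]
    have : ∑ j ∈ range (m+1), ((m.choose j : ℂ)) * (dp s j * dp (t-2) (m-j)) = (-1:ℂ)^m * m.factorial := by
      have h := hvand s (t-2) m
      rw [show s + (t-2) = -1 by rw [hs]; ring, dp_neg_one m] at h
      rw [← h]
      exact Finset.sum_congr rfl fun j _ => by ring
    rw [this]
  have hcm_ne : R.coeff m ≠ 0 := by
    intro h0
    rw [h0, mul_zero] at hcm
    have hne : ((N:ℕ):ℂ) * ((m+1:ℕ):ℂ) * t * (t-1) * ((-1:ℂ)^m * m.factorial) ≠ 0 := by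
      refine mul_ne_zero (mul_ne_zero (mul_ne_zero (mul_ne_zero ?_ ?_) ht) ?_)
        (mul_ne_zero (pow_ne_zero _ (by norm_num)) ?_)
      · rw [hN]; exact Nat.cast_ne_zero.mpr (by omega)
      · exact Nat.cast_ne_zero.mpr (by omega)
      · exact sub_ne_zero.mpr ht1
      · exact Nat.cast_ne_zero.mpr (Nat.factorial_ne_zero m)
    exact hne hcm.symm
  -- final assembly
  rw [hE1, hE2]
  rw [show N + 1 = (m+1) + 1 + 1 by omega, Finset.sum_range_succ, Finset.sum_range_succ]
  rw [show (m+1)+1 = N by omega] at *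
  rw [hcN, hcN1, zero_mul, zero_mul, add_zero, add_zero]
  have hred : ∀ r ∈ range (m+1), R.coeff r *
      (∑ k ∈ range (m+1), (-1:ℂ)^k * (m.choose k : ℂ) * (k:ℂ)^r)
      = if r = m then R.coeff m * ((-1:ℂ)^m * m.factorial) else 0 := by
    intro r hr
    rw [alt_sum_pow m r (Nat.lt_succ_iff.mp (mem_range.mp hr))]
    by_cases h : r = m
    · subst h; rw [if_pos rfl, if_pos rfl]
    · rw [if_neg h, if_neg h, mul_zero]
  rw [Finset.sum_congr rfl hred, Finset.sum_ite_eq' (range (m+1)) m]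
  rw [if_pos (by simp)]
  exact mul_ne_zero hcm_ne (mul_ne_zero (pow_ne_zero _ (by norm_num))
    (Nat.cast_ne_zero.mpr (Nat.factorial_ne_zero m)))

lemma iteratedDeriv_zero_fun (n : ℕ) (x : ℂ) : iteratedDeriv n (fun _ : ℂ => (0:ℂ)) x = 0 := by
  induction n generalizing x with
  | zero => simp
  | succ n ih => rw [iteratedDeriv_succ', deriv_const']; exact ih x

end AluthgeAux

/-- for `λ ∈ (0,1)` and `m ≥ 2`, the function
`f(z) = 1 + ∑_{k=1}^m (-1)^k C(m,k) (1+kz)^{1-λ} ((1+(k+1)z)/(1+z))^λ`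
(principal branches) is holomorphic on `{z : Re z > -1/(m+1)}` and does not vanish
identically there; in particular `f(1/n) ≠ 0` for some integer `n ≥ 1`. -/
theorem aluthge_auxiliary_function_not_identically_zero
    (l : ℝ) (hl : l ∈ Set.Ioo (0 : ℝ) 1) (m : ℕ) (hm : 2 ≤ m)
    (f : ℂ → ℂ)
    (hf : ∀ z : ℂ, f z = 1 + ∑ k ∈ Finset.Icc 1 m,
      (-1 : ℂ) ^ k * (m.choose k : ℂ) * (1 + (k : ℂ) * z) ^ ((1 : ℂ) - (l : ℂ)) *
        ((1 + ((k : ℂ) + 1) * z) / (1 + z)) ^ (l : ℂ)) :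
    DifferentiableOn ℂ f {z : ℂ | -1 / ((m : ℝ) + 1) < z.re} ∧
      ¬ (∀ z ∈ {z : ℂ | -1 / ((m : ℝ) + 1) < z.re}, f z = 0) ∧
      ∃ n : ℕ, 1 ≤ n ∧ f (1 / (n : ℂ)) ≠ 0 := by
  obtain ⟨hl0, hl1⟩ := hl
  set t : ℂ := (l : ℂ) with htdef
  have ht0 : t ≠ 0 := Complex.ofReal_ne_zero.mpr (ne_of_gt hl0)
  have ht1 : t ≠ 1 := fun h => (ne_of_lt hl1) (by rw [htdef] at h; exact_mod_cast h)
  have hbase : ∀ (c : ℕ), c ≤ m+1 → ∀ z : ℂ, -1 / ((m:ℝ)+1) < z.re →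
      0 < (1 + (c:ℂ)*z).re := by
    intro c hc z hz
    have hre : (1 + (c:ℂ)*z).re = 1 + (c:ℝ) * z.re := by
      simp [Complex.add_re, Complex.mul_re]
    rw [hre]
    have hm1 : (0:ℝ) < (m:ℝ)+1 := by positivity
    rcases le_or_gt 0 z.re with h | h
    · have : 0 ≤ (c:ℝ) * z.re := mul_nonneg (by positivity) h
      linarith
    · have h1 : -1 < ((m:ℝ)+1) * z.re := by
        rw [div_lt_iff₀ hm1] at hz
        linarith
      have hcle : (c:ℝ) ≤ (m:ℝ)+1 := by exact_mod_cast hc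
      have h2 : ((m:ℝ)+1) * z.re ≤ (c:ℝ) * z.re :=
        mul_le_mul_of_nonpos_right hcle (le_of_lt h)
      linarith
  have hfe : f = fun z => 1 + ∑ k ∈ Finset.Icc 1 m,
      (-1 : ℂ) ^ k * (m.choose k : ℂ) * (1 + (k : ℂ) * z) ^ ((1 : ℂ) - t) *
        ((1 + ((k : ℂ) + 1) * z) / (1 + z)) ^ t := funext hf
  have hdiffAt : ∀ z : ℂ, -1/((m:ℝ)+1) < z.re → DifferentiableAt ℂ f z := by
    intro z hz
    have h1z : 0 < (1 + z).re := by
      have := hbase 1 (by omega) z hz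
      simpa using this
    have h1z0 : (1 + z) ≠ 0 := fun h0 => by rw [h0] at h1z; simp at h1z
    rw [hfe]
    refine (differentiableAt_const (1:ℂ)).add (DifferentiableAt.fun_sum fun k hk => ?_)
    obtain ⟨hk1, hkm⟩ := Finset.mem_Icc.mp hk
    have hk2 : 0 < (1 + (k:ℂ)*z).re := hbase k (by omega) z hz
    have hk3 : 0 < (1 + ((k:ℂ)+1)*z).re := by
      have := hbase (k+1) (by omega) z hz
      push_cast at this
      exact this
    have hlin1 : DifferentiableAt ℂ (fun z : ℂ => 1 + (k:ℂ)*z) z :=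
      (differentiableAt_const _).add ((differentiableAt_const _).mul differentiableAt_id)
    have hlin2 : DifferentiableAt ℂ (fun z : ℂ => 1 + ((k:ℂ)+1)*z) z :=
      (differentiableAt_const _).add ((differentiableAt_const _).mul differentiableAt_id)
    have hlin3 : DifferentiableAt ℂ (fun z : ℂ => 1 + z) z :=
      (differentiableAt_const _).add differentiableAt_id
    have hcp1 : DifferentiableAt ℂ (fun z : ℂ => (1 + (k:ℂ)*z) ^ ((1:ℂ) - t)) z :=
      hlin1.cpow (differentiableAt_const _) (AluthgeAux.pos_re_mem_slitPlane hk2)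
    have hcp2 : DifferentiableAt ℂ
        (fun z : ℂ => ((1 + ((k:ℂ)+1)*z)/(1+z)) ^ t) z :=
      (hlin2.div hlin3 h1z0).cpow (differentiableAt_const _) (AluthgeAux.div_mem_slitPlane hk3 h1z)
    exact (((differentiableAt_const _).mul (differentiableAt_const _)).mul hcp1).mul hcp2
  have hUo : IsOpen {z : ℂ | -1 / ((m:ℝ)+1) < z.re} :=
    isOpen_lt continuous_const Complex.continuous_re
  have hDiffOn : DifferentiableOn ℂ f {z : ℂ | -1 / ((m:ℝ)+1) < z.re} :=
    fun z hz => (hdiffAt z hz).differentiableWithinAt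
  have key : ∃ n : ℕ, 1 ≤ n ∧ f (1/(n:ℂ)) ≠ 0 := by
    by_contra hcon
    push_neg at hcon
    have hA : AnalyticOnNhd ℂ f {z : ℂ | -1 / ((m:ℝ)+1) < z.re} :=
      hDiffOn.analyticOnNhd hUo
    have hPre : IsPreconnected {z : ℂ | -1 / ((m:ℝ)+1) < z.re} :=
      (convex_halfSpace_re_gt _).isPreconnected
    have h0U : (0:ℂ) ∈ {z : ℂ | -1 / ((m:ℝ)+1) < z.re} := by
      simp only [Set.mem_setOf_eq, Complex.zero_re]
      exact div_neg_of_neg_of_pos (by norm_num) (by positivity)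
    have htend : Filter.Tendsto (fun n : ℕ => 1/(n:ℂ)) Filter.atTop
        (nhdsWithin 0 {(0:ℂ)}ᶜ) := by
      apply tendsto_nhdsWithin_of_tendsto_nhds_of_eventually_within
      · have h1 : Filter.Tendsto (fun n : ℕ => ((1/(n:ℝ) : ℝ) : ℂ)) Filter.atTop
            (nhds (((0:ℝ):ℂ))) :=
          (Complex.continuous_ofReal.tendsto _).comp tendsto_one_div_atTop_nhds_zero_nat
        push_cast at h1
        simpa using h1
      · refine Filter.eventually_atTop.mpr ⟨1, fun n hn => ?_⟩
        simp only [Set.mem_compl_iff, Set.mem_singleton_iff]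
        exact one_div_ne_zero (Nat.cast_ne_zero.mpr (by omega))
    have hfreq : ∃ᶠ z in nhdsWithin 0 {(0:ℂ)}ᶜ, f z = 0 :=
      htend.frequently (Filter.Eventually.frequently
        (Filter.eventually_atTop.mpr ⟨1, fun n hn => hcon n hn⟩))
    have hzero := hA.eqOn_zero_of_preconnected_of_frequently_eq_zero hPre h0U hfreq
    set G : ℂ → ℂ := fun w => ∑ k ∈ Finset.range (m+1),
      ((-1:ℂ)^k * (m.choose k : ℂ)) *
        ((1 + (k:ℂ)*w) ^ ((1:ℂ) - t) * (1 + ((k:ℂ)+1)*w) ^ t) with hG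
    have hGf : ∀ z : ℂ, -1/((m:ℝ)+1) < z.re → G z = f z * (1+z) ^ t := by
      intro z hz
      have h1z : 0 < (1 + z).re := by
        have := hbase 1 (by omega) z hz
        simpa using this
      rw [hfe, hG]
      simp only []
      conv_rhs => rw [add_mul, one_mul, Finset.sum_mul, ← Finset.Ico_add_one_right_eq_Icc, Finset.sum_Ico_eq_sum_range]
      conv_lhs => rw [Finset.sum_range_succ']
      have hg0 : ((-1:ℂ)^0 * (m.choose 0 : ℂ)) *
          ((1 + ((0:ℕ):ℂ)*z) ^ ((1:ℂ) - t) * (1 + (((0:ℕ):ℂ)+1)*z) ^ t) = (1+z)^t := by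
        norm_num
      rw [hg0, add_comm]
      congr 1
      refine Finset.sum_congr rfl fun k hk => ?_
      have hidx : 1 + k = k + 1 := by omega
      rw [hidx]
      have hrw : (1 + ((((k+1):ℕ):ℂ)+1)*z) = 1 + (((k+2):ℕ):ℂ)*z := by push_cast; ring
      have hknum : 0 < (1 + ((((k+1):ℕ):ℂ)+1)*z).re := by
        rw [hrw]
        exact hbase (k+2) (by have := Finset.mem_range.mp hk; omega) z hz
      have hq := AluthgeAux.cpow_div_mul t hknum h1z
      linear_combination ((-1:ℂ)^k * (m.choose (k+1) : ℂ) *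
        (1 + (((k+1):ℕ):ℂ)*z) ^ ((1:ℂ) - t)) * hq
    have hGzero : ∀ z ∈ {z : ℂ | -1 / ((m:ℝ)+1) < z.re}, G z = (fun _ : ℂ => (0:ℂ)) z := by
      intro z hz
      have := hzero hz
      simp only [Pi.zero_apply] at this
      rw [hGf z hz, this, zero_mul]
    have hGev : G =ᶠ[nhds (0:ℂ)] (fun _ : ℂ => (0:ℂ)) :=
      Filter.eventuallyEq_of_mem (hUo.mem_nhds h0U) hGzero
    have hIterzero : iteratedDeriv (m+2) G 0 = 0 := by
      rw [Filter.EventuallyEq.iteratedDeriv_eq (m+2) hGev]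
      exact AluthgeAux.iteratedDeriv_zero_fun (m+2) 0
    rw [hG] at hIterzero
    exact AluthgeAux.key_nonzero m hm t ht0 ht1 hIterzero
  refine ⟨hDiffOn, ?_, key⟩
  intro Hall
  obtain ⟨n, hn1, hne⟩ := key
  apply hne
  apply Hall
  have hmem : (1/(n:ℂ)).re = 1/(n:ℝ) := by
    have : (1/(n:ℂ)) = ((1/(n:ℝ) : ℝ) : ℂ) := by push_cast; ring
    rw [this, Complex.ofReal_re]
  simp only [Set.mem_setOf_eq, hmem]
  have hneg : -1/((m:ℝ)+1) < 0 := div_neg_of_neg_of_pos (by norm_num) (by positivity)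
  have hpos : (0:ℝ) ≤ 1/(n:ℝ) := by positivity
  linarith
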